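/- Let K : Ω × Ω → ℝ be a symmetric positive semidefinite kernel on a compact Ω ⊂ ℝᵈ satisfying |K(x,x) − K(x,y)| ≤ L‖x−y‖ for all x,y ∈ Ω. Let z₁,…,zₙ ∈ Ω be any pivots for which the pivoted Cholesky algorithm is well-defined (each diagonal residual at the next pivot is positive), and let Rₙ be the residual after n steps. Then for all x ∈ Ω, 0 ≤ Rₙ(x,x) ≤ 4L · min_{1≤i≤n} ‖x − zᵢ‖. -/

import Mathlib

def IsPSDKernel {E : Type*} (Ω : Set E) (K : E → E → ℝ) : Prop :=
  (∀ x ∈ Ω, ∀ y ∈ Ω, K x y = K y x) ∧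
  ∀ (n : ℕ) (p : Fin n → E), (∀ i, p i ∈ Ω) →
    ∀ c : Fin n → ℝ, 0 ≤ ∑ i, ∑ j, c i * c j * K (p i) (p j)

noncomputable def cholStep {E : Type*} (R : E → E → ℝ) (z : E) : E → E → ℝ :=
  fun x y => R x y - R x z * R z y / R z z

noncomputable def cholResid {E : Type*} (K : E → E → ℝ) (zs : List E) : E → E → ℝ :=
  zs.foldl cholStep K

variable {E : Type*} {Ω : Set E}

lemma cholResid_cons (K : E → E → ℝ) (a : E) (zs : List E) :
    cholResid K (a :: zs) = cholResid (cholStep K a) zs := rfl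

/-- Well-definedness of the pivot sequence. -/
def WD {E : Type*} (K : E → E → ℝ) : List E → Prop
  | [] => True
  | a :: l => 0 < K a a ∧ WD (cholStep K a) l

lemma wd_of_pivots : ∀ (zs : List E) (K : E → E → ℝ),
    (∀ i : Fin zs.length, 0 < cholResid K (zs.take i) (zs.get i) (zs.get i)) → WD K zs := by
  intro zs
  induction zs with
  | nil => intro K _; trivial
  | cons a l ih =>
    intro K h
    refine ⟨?_, ih (cholStep K a) ?_⟩
    · have := h ⟨0, Nat.succ_pos _⟩
      simpa [cholResid] using this
    · intro i
      have := h i.succ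
      simpa [cholResid] using this

/-- Diagonal nonnegativity from PSD. -/
lemma diag_nonneg {K : E → E → ℝ} (hK : IsPSDKernel Ω K) {x : E} (hx : x ∈ Ω) : 0 ≤ K x x := by
  have := hK.2 1 (fun _ => x) (fun _ => hx) (fun _ => 1)
  simpa using this

/-- PSD is preserved by a Cholesky step with positive pivot diagonal. -/
lemma cholStep_psd {K : E → E → ℝ} (hK : IsPSDKernel Ω K) {z : E} (hz : z ∈ Ω)
    (hzz : 0 < K z z) : IsPSDKernel Ω (cholStep K z) := by
  obtain ⟨hsym, hpsd⟩ := hK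
  have hzz' : K z z ≠ 0 := ne_of_gt hzz
  constructor
  · intro x hx y hy
    simp only [cholStep]
    rw [hsym x hx y hy, hsym x hx z hz, hsym z hz y hy]
    ring
  · intro m p hp c
    set S : ℝ := ∑ i, c i * K (p i) z with hS
    set Q : ℝ := ∑ i, ∑ j, c i * c j * K (p i) (p j) with hQ
    have key : ∑ i, ∑ j, c i * c j * cholStep K z (p i) (p j) = Q - S * S / K z z := by
      have e1 : ∀ i j, c i * c j * cholStep K z (p i) (p j)
          = c i * c j * K (p i) (p j) - (c i * K (p i) z) * (c j * K (p j) z) / K z z := by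
        intro i j
        simp only [cholStep]
        rw [hsym z hz (p j) (hp j)]
        ring
      simp only [e1, Finset.sum_sub_distrib]
      congr 1
      calc ∑ x, ∑ y, c x * K (p x) z * (c y * K (p y) z) / K z z
          = ∑ x, (c x * K (p x) z) * S / K z z := by
            refine Finset.sum_congr rfl fun x _ => ?_
            rw [← Finset.sum_div, ← Finset.mul_sum]
        _ = S * S / K z z := by rw [← Finset.sum_div, ← Finset.sum_mul]
    rw [key]
    set t : ℝ := -S / K z z with ht
    have h2 : ∑ i, c i * t * K (p i) z = t * S := by
      rw [hS, Finset.mul_sum]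
      exact Finset.sum_congr rfl (fun i _ => by ring)
    have h3 : ∑ j, t * c j * K z (p j) = t * S := by
      rw [hS, Finset.mul_sum]
      refine Finset.sum_congr rfl (fun j _ => ?_)
      rw [hsym z hz (p j) (hp j)]; ring
    have hq := hpsd (m + 1) (Fin.snoc p z)
      (fun i => Fin.lastCases (by simpa using hz) (fun i => by simpa using hp i) i)
      (Fin.snoc c t)
    have expand : ∑ i, ∑ j, (Fin.snoc c t : Fin (m+1) → ℝ) i * (Fin.snoc c t : Fin (m+1) → ℝ) j *
        K ((Fin.snoc p z : Fin (m+1) → E) i) ((Fin.snoc p z : Fin (m+1) → E) j)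
        = Q + t * S + (t * S + t * t * K z z) := by
      simp only [Fin.sum_univ_castSucc, Fin.snoc_castSucc, Fin.snoc_last]
      rw [Finset.sum_add_distrib, h2, h3, hQ]
    rw [expand] at hq
    have : Q + t * S + (t * S + t * t * K z z) = Q - S * S / K z z := by
      rw [ht]; field_simp; ring
    linarith [hq, this ▸ hq]

/-- A zero row persists through the algorithm. -/
lemma row_zero_persists : ∀ (zs : List E) (R : E → E → ℝ) (w : E),
    (∀ y, R w y = 0) → ∀ y, cholResid R zs w y = 0 := by
  intro zs
  induction zs with
  | nil => intro R w h y; exact h y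
  | cons a l ih =>
    intro R w h y
    rw [cholResid_cons]
    exact ih _ w (fun y => by simp [cholStep, h]) y

/-- A zero column persists through the algorithm. -/
lemma col_zero_persists : ∀ (zs : List E) (R : E → E → ℝ) (w : E),
    (∀ y, R y w = 0) → ∀ y, cholResid R zs y w = 0 := by
  intro zs
  induction zs with
  | nil => intro R w h y; exact h y
  | cons a l ih =>
    intro R w h y
    rw [cholResid_cons]
    exact ih _ w (fun y => by simp [cholStep, h]) y

/-- The main induction. -/
lemma cholResid_main : ∀ (zs : List E) (K : E → E → ℝ), IsPSDKernel Ω K →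
    (∀ w ∈ zs, w ∈ Ω) → WD K zs →
    IsPSDKernel Ω (cholResid K zs) ∧
    (∀ w ∈ zs, (∀ y, cholResid K zs w y = 0) ∧ (∀ y, cholResid K zs y w = 0)) ∧
    (∀ x ∈ Ω, ∀ w ∈ Ω,
      cholResid K zs x x - cholResid K zs x w - cholResid K zs w x + cholResid K zs w w
        ≤ K x x - K x w - K w x + K w w) := by
  intro zs
  induction zs with
  | nil => intro K hK _ _; exact ⟨hK, by simp, fun x _ w _ => le_refl _⟩
  | cons a l ih =>
    intro K hK hmem hwd
    obtain ⟨haa, hwd'⟩ := hwd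
    have haΩ : a ∈ Ω := hmem a List.mem_cons_self
    have haa' : K a a ≠ 0 := ne_of_gt haa
    have hK' : IsPSDKernel Ω (cholStep K a) := cholStep_psd hK haΩ haa
    obtain ⟨hpsd, hzero, hquad⟩ := ih (cholStep K a) hK' (fun w hw => hmem w (List.mem_cons_of_mem a hw)) hwd'
    rw [cholResid_cons]
    refine ⟨hpsd, ?_, ?_⟩
    · intro w hw
      rcases List.mem_cons.mp hw with rfl | hw
      · constructor
        · exact row_zero_persists l _ w (fun y => by simp [cholStep, haa'])
        · exact col_zero_persists l _ w (fun y => by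
            simp only [cholStep]
            field_simp
            ring)
      · exact hzero w hw
    · intro x hx w hw
      refine le_trans (hquad x hx w hw) ?_
      -- one-step decrease of the quadratic form
      have hsym := hK.1
      simp only [cholStep]
      have e : K x x - K x a * K a x / K a a - (K x w - K x a * K a w / K a a)
          - (K w x - K w a * K a x / K a a) + (K w w - K w a * K a w / K a a)
          = K x x - K x w - K w x + K w w - (K x a - K w a) ^ 2 / K a a := by
        rw [hsym a haΩ x hx, hsym a haΩ w hw]
        field_simp
        ring
      rw [e]
      have : 0 ≤ (K x a - K w a) ^ 2 / K a a := div_nonneg (sq_nonneg _) (le_of_lt haa)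
      linarith

theorem multistep_diag_control {d n : ℕ}
    (Ω : Set (EuclideanSpace ℝ (Fin d))) (hΩ : IsCompact Ω)
    (K : EuclideanSpace ℝ (Fin d) → EuclideanSpace ℝ (Fin d) → ℝ)
    (hK : IsPSDKernel Ω K) (L : ℝ) (hL : 0 < L)
    (hLip : ∀ x ∈ Ω, ∀ y ∈ Ω, |K x x - K x y| ≤ L * ‖x - y‖)
    (z : Fin n → EuclideanSpace ℝ (Fin d)) (hzΩ : ∀ i, z i ∈ Ω)
    (hwd : ∀ k : Fin n,
      0 < cholResid K ((List.ofFn z).take k) (z k) (z k)) :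
    ∀ x ∈ Ω, 0 ≤ cholResid K (List.ofFn z) x x ∧
      ∀ i : Fin n, cholResid K (List.ofFn z) x x ≤ 4 * L * ‖x - z i‖ := by
  have hwd' : WD K (List.ofFn z) := by
    apply wd_of_pivots
    intro i
    have hi : i.1 < n := by simpa using i.2
    have := hwd ⟨i.1, hi⟩
    simpa [List.get_ofFn] using this
  obtain ⟨hpsd, hzero, hquad⟩ := cholResid_main (Ω := Ω) (List.ofFn z) K hK
    (fun w hw => by obtain ⟨i, rfl⟩ := List.mem_ofFn.mp hw; exact hzΩ i) hwd'
  intro x hx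
  refine ⟨diag_nonneg hpsd hx, ?_⟩
  intro i
  set R := cholResid K (List.ofFn z)
  have hzi : z i ∈ List.ofFn z := List.mem_ofFn.mpr ⟨i, rfl⟩
  obtain ⟨hrow, hcol⟩ := hzero (z i) hzi
  have hq := hquad x hx (z i) (hzΩ i)
  have hRx : R x x ≤ K x x - K x (z i) - K (z i) x + K (z i) (z i) := by
    have := hq
    rw [hrow x, hcol x, hrow (z i)] at this
    linarith
  have h1 : |K x x - K x (z i)| ≤ L * ‖x - z i‖ := hLip x hx (z i) (hzΩ i)
  have h2 : |K (z i) (z i) - K (z i) x| ≤ L * ‖(z i) - x‖ := hLip (z i) (hzΩ i) x hx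
  rw [norm_sub_rev] at h2
  have hb1 : K x x - K x (z i) ≤ L * ‖x - z i‖ := le_trans (le_abs_self _) h1
  have hb2 : K (z i) (z i) - K (z i) x ≤ L * ‖x - z i‖ := le_trans (le_abs_self _) h2
  have hnn : 0 ≤ ‖x - z i‖ := norm_nonneg _
  nlinarith [hRx, hb1, hb2]
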